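/- For a formal system S, A ⊆ X, and a ∈ X: a is S-paradeductible from A (A ⊢ᴾ_S a) if and only if there exists an S-consistent subset A' ⊆ A with A' ⊢_S a. -/

import Mathlib

/-- A formal system: a set of axioms and a family of finitary inference rules
on the set `X` of formulas.  A rule `(P, x)` allows inferring `x` from the
(finite, nonempty) set of premises `P`. -/
structure FormalSystem (X : Type) where
  axioms : Set X
  rules : Set (Set X × X)
  finitary : ∀ r ∈ rules, r.1.Finite ∧ r.1.Nonempty

/-- `d : Fin n → X` is an `S`-deduction from `A`: each entry is a member of `A`,
an axiom, or an immediate consequence of earlier entries by a rule. -/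
def IsDeduction {X : Type} (S : FormalSystem X) (A : Set X)
    {n : ℕ} (d : Fin n → X) : Prop :=
  ∀ i : Fin n, d i ∈ A ∨ d i ∈ S.axioms ∨
    ∃ r ∈ S.rules, r.2 = d i ∧
      ∃ f : X → Fin n, ∀ p ∈ r.1, f p < i ∧ d (f p) = p

/-- `a` is `S`-deducible from `A`. -/
def Der {X : Type} (S : FormalSystem X) (A : Set X) (a : X) : Prop :=
  ∃ (n : ℕ) (d : Fin n → X) (h : 0 < n),
    IsDeduction S A d ∧ d ⟨n - 1, by omega⟩ = a

/-- `A` is `S`-consistent. -/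
def Consistent {X : Type} (S : FormalSystem X) (A : Set X) : Prop :=
  {a | Der S A a} ≠ Set.univ

/-- `σ : Fin n → Set X × X` is a paradeduction in `S` from `A`: every attached
set is `S`-consistent, and each pair `(Aᵢ, aᵢ)` satisfies: `aᵢ ∈ A` and
`Aᵢ = {aᵢ}`; or `aᵢ` is an axiom and `Aᵢ = ∅`; or `aᵢ` follows from preceding
formulas by a rule and `Aᵢ` is the union of their attached sets. -/
def IsParaDeduction {X : Type} (S : FormalSystem X) (A : Set X)
    {n : ℕ} (σ : Fin n → Set X × X) : Prop :=
  ∀ i : Fin n, Consistent S (σ i).1 ∧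
    (((σ i).2 ∈ A ∧ (σ i).1 = {(σ i).2}) ∨
     ((σ i).2 ∈ S.axioms ∧ (σ i).1 = ∅) ∨
     (∃ r ∈ S.rules, r.2 = (σ i).2 ∧
        ∃ f : X → Fin n, (∀ p ∈ r.1, f p < i ∧ (σ (f p)).2 = p) ∧
          (σ i).1 = ⋃ p ∈ r.1, (σ (f p)).1))

/-- `a` is `S`-paradeductible from `A`. -/
def ParaDer {X : Type} (S : FormalSystem X) (A : Set X) (a : X) : Prop :=
  ∃ (n : ℕ) (σ : Fin n → Set X × X) (h : 0 < n),
    IsParaDeduction S A σ ∧ (σ ⟨n - 1, by omega⟩).2 = a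

/- ---------- auxiliary lemmas ---------- -/

lemma der_mono {X : Type} {S : FormalSystem X} {A B : Set X} (h : A ⊆ B) {a : X}
    (hd : Der S A a) : Der S B a := by
  obtain ⟨n, d, hn, hded, hlast⟩ := hd
  refine ⟨n, d, hn, fun i => ?_, hlast⟩
  rcases hded i with h1 | h2 | h3
  · exact Or.inl (h h1)
  · exact Or.inr (Or.inl h2)
  · exact Or.inr (Or.inr h3)

lemma consistent_mono {X : Type} {S : FormalSystem X} {A B : Set X} (h : A ⊆ B)
    (hc : Consistent S B) : Consistent S A := by
  intro hcon
  apply hc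
  rw [Set.eq_univ_iff_forall] at hcon ⊢
  exact fun a => der_mono h (hcon a)

/-- concatenation of two index functions -/
def dapp {X : Type} {m n : ℕ} (d1 : Fin m → X) (d2 : Fin n → X) : Fin (m + n) → X :=
  fun i => if h : i.val < m then d1 ⟨i.val, h⟩ else d2 ⟨i.val - m, by omega⟩

lemma isDeduction_dapp {X : Type} {S : FormalSystem X} {A : Set X} {m n : ℕ}
    {d1 : Fin m → X} {d2 : Fin n → X}
    (h1 : IsDeduction S A d1) (h2 : IsDeduction S A d2) :
    IsDeduction S A (dapp d1 d2) := by
  intro i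
  by_cases h : i.val < m
  · have hv : dapp d1 d2 i = d1 ⟨i.val, h⟩ := dif_pos h
    rw [hv]
    rcases h1 ⟨i.val, h⟩ with hA | hAx | ⟨r, hr, hr2, f, hf⟩
    · exact Or.inl hA
    · exact Or.inr (Or.inl hAx)
    · refine Or.inr (Or.inr ⟨r, hr, hr2, fun p => ⟨(f p).val, by omega⟩, fun p hp => ?_⟩)
      obtain ⟨hlt, heq⟩ := hf p hp
      constructor
      · exact Fin.lt_def.mpr (by simpa [Fin.lt_def] using hlt)
      · have : (⟨(f p).val, by omega⟩ : Fin (m + n)).val < m := (f p).isLt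
        simp only [dapp, dif_pos this]
        simpa using heq
  · have hv : dapp d1 d2 i = d2 ⟨i.val - m, by omega⟩ := dif_neg h
    rw [hv]
    rcases h2 ⟨i.val - m, by omega⟩ with hA | hAx | ⟨r, hr, hr2, f, hf⟩
    · exact Or.inl hA
    · exact Or.inr (Or.inl hAx)
    · refine Or.inr (Or.inr ⟨r, hr, hr2, fun p => ⟨m + (f p).val, by omega⟩, fun p hp => ?_⟩)
      obtain ⟨hlt, heq⟩ := hf p hp
      have hlt' : (f p).val < i.val - m := hlt
      constructor
      · exact Fin.lt_def.mpr (by simp; omega)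
      · have hge : ¬ (m + (f p).val < m) := by omega
        simp only [dapp, dif_neg hge]
        have : m + (f p).val - m = (f p).val := by omega
        simp only [this]
        simpa using heq

lemma der_finset {X : Type} {S : FormalSystem X} {A : Set X} {P : Set X}
    (hP : P.Finite) (h : ∀ p ∈ P, Der S A p) :
    ∃ (n : ℕ) (d : Fin n → X), IsDeduction S A d ∧ ∀ p ∈ P, ∃ i, d i = p := by
  revert h
  refine Set.Finite.induction_on (motive := fun P _ => (∀ p ∈ P, Der S A p) →
    ∃ (n : ℕ) (d : Fin n → X), IsDeduction S A d ∧ ∀ p ∈ P, ∃ i, d i = p) P hP ?_ ?_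
  · exact fun _ => ⟨0, Fin.elim0, fun i => i.elim0, fun p hp => absurd hp (Set.notMem_empty p)⟩
  · rintro b s ha hs IH h
    obtain ⟨n, d, hd, hcov⟩ := IH (fun p hp => h p (Set.mem_insert_of_mem _ hp))
    obtain ⟨m, e, hm, he, helast⟩ := h b (Set.mem_insert _ _)
    refine ⟨n + m, dapp d e, isDeduction_dapp hd he, fun p hp => ?_⟩
    rcases Set.mem_insert_iff.mp hp with rfl | hps
    · refine ⟨⟨n + (m - 1), by omega⟩, ?_⟩
      have hge : ¬ (n + (m - 1) < n) := by omega
      simp only [dapp, dif_neg hge]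
      have : n + (m - 1) - n = m - 1 := by omega
      simp only [this]
      exact helast
    · obtain ⟨i, hi⟩ := hcov p hps
      refine ⟨⟨i.val, by omega⟩, ?_⟩
      simp only [dapp, dif_pos i.isLt]
      simpa using hi

lemma der_rule {X : Type} {S : FormalSystem X} {A : Set X} {r : Set X × X}
    (hr : r ∈ S.rules) (h : ∀ p ∈ r.1, Der S A p) : Der S A r.2 := by
  obtain ⟨hfin, _⟩ := S.finitary r hr
  obtain ⟨n, d, hd, hcov⟩ := der_finset hfin h
  classical
  refine ⟨n + 1, fun i => if h : i.val < n then d ⟨i.val, h⟩ else r.2, by omega, ?_, ?_⟩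
  · intro i
    by_cases hi : i.val < n
    · simp only [dif_pos hi]
      rcases hd ⟨i.val, hi⟩ with hA | hAx | ⟨r', hr', hr2', f, hf⟩
      · exact Or.inl hA
      · exact Or.inr (Or.inl hAx)
      · refine Or.inr (Or.inr ⟨r', hr', hr2', fun p => ⟨(f p).val, by omega⟩, fun p hp => ?_⟩)
        obtain ⟨hlt, heq⟩ := hf p hp
        refine ⟨Fin.lt_def.mpr (by simpa [Fin.lt_def] using hlt), ?_⟩
        simp only [dif_pos (f p).isLt]
        simpa using heq
    · simp only [dif_neg hi]
      refine Or.inr (Or.inr ⟨r, hr, rfl, fun p =>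
        if hp : p ∈ r.1 then ⟨((hcov p hp).choose).val, by omega⟩ else ⟨0, by omega⟩,
        fun p hp => ?_⟩)
      refine ⟨?_, ?_⟩
      · simp only [dif_pos hp]
        exact Fin.lt_def.mpr (by simp; omega)
      · simp only [dif_pos hp, dif_pos ((hcov p hp).choose).isLt]
        have := (hcov p hp).choose_spec
        simpa using this
  · have : ¬ ((⟨n + 1 - 1, by omega⟩ : Fin (n + 1)).val < n) := by simp
    simp only [dif_neg this]

lemma der_mem {X : Type} {S : FormalSystem X} {A : Set X} {a : X} (ha : a ∈ A) :
    Der S A a := ⟨1, fun _ => a, one_pos, fun _ => Or.inl ha, rfl⟩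

lemma der_axiom {X : Type} {S : FormalSystem X} {A : Set X} {a : X} (ha : a ∈ S.axioms) :
    Der S A a := ⟨1, fun _ => a, one_pos, fun _ => Or.inr (Or.inl ha), rfl⟩


/-- `A ⊢ᴾ_S a` iff there is an `S`-consistent subset `A' ⊆ A` with `A' ⊢_S a`. -/
theorem stmt_4 {X : Type} (S : FormalSystem X) (A : Set X) (a : X) :
    ParaDer S A a ↔ ∃ A' ⊆ A, Consistent S A' ∧ Der S A' a := by
  constructor
  · rintro ⟨n, σ, hn, hpd, hlast⟩
    have key0 : ∀ m : ℕ, ∀ i : Fin n, i.val < m → (σ i).1 ⊆ A ∧ Der S (σ i).1 (σ i).2 := by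
      intro m
      induction m with
      | zero => exact fun i hi => absurd hi (by omega)
      | succ m IH =>
        intro i hi
        have IH' : ∀ j : Fin n, j < i → (σ j).1 ⊆ A ∧ Der S (σ j).1 (σ j).2 := by
          intro j hj
          exact IH j (by have := Fin.lt_def.mp hj; omega)
        obtain ⟨hc, hcase⟩ := hpd i
        rcases hcase with ⟨hmem, heq⟩ | ⟨hax, heq⟩ | ⟨r, hr, hr2, f, hf, hunion⟩
        · exact ⟨heq ▸ Set.singleton_subset_iff.mpr hmem,
            der_mem (heq ▸ Set.mem_singleton _)⟩
        · exact ⟨heq ▸ Set.empty_subset A, der_axiom hax⟩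
        · constructor
          · rw [hunion]
            exact Set.iUnion₂_subset fun p hp => (IH' (f p) (hf p hp).1).1
          · rw [← hr2]
            apply der_rule hr
            intro p hp
            have hsub : (σ (f p)).1 ⊆ (σ i).1 := by
              rw [hunion]
              exact Set.subset_biUnion_of_mem (u := fun x => (σ (f x)).1) hp
            have := (IH' (f p) (hf p hp).1).2
            rw [(hf p hp).2] at this
            exact der_mono hsub this
    have key : ∀ i : Fin n, (σ i).1 ⊆ A ∧ Der S (σ i).1 (σ i).2 := fun i => key0 n i i.isLt
    obtain ⟨hsub, hder⟩ := key ⟨n - 1, by omega⟩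
    exact ⟨(σ ⟨n - 1, by omega⟩).1, hsub, (hpd _).1, hlast ▸ hder⟩
  · rintro ⟨A', hA'A, hcons, n, d, hn, hd, hlast⟩
    classical
    have ex : ∀ k, k ≤ n → ∃ B : Fin n → Set X, ∀ i : Fin n, i.val < k →
        B i ⊆ A' ∧
        ((d i ∈ A' ∧ B i = {d i}) ∨ (d i ∈ S.axioms ∧ B i = ∅) ∨
         (∃ r ∈ S.rules, r.2 = d i ∧ ∃ f : X → Fin n,
            (∀ p ∈ r.1, f p < i ∧ d (f p) = p) ∧ B i = ⋃ p ∈ r.1, B (f p))) := by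
      intro k
      induction k with
      | zero => exact fun _ => ⟨fun _ => ∅, fun i hi => absurd hi (by omega)⟩
      | succ k IH =>
        intro hk
        obtain ⟨B, hB⟩ := IH (by omega)
        set ik : Fin n := ⟨k, by omega⟩ with hik
        have hupd : ∀ (T : Set X) (j : Fin n), j.val < k →
            Function.update B ik T j = B j := by
          intro T j hj
          apply Function.update_of_ne
          intro hje
          rw [hje] at hj
          exact absurd hj (lt_irrefl k)
        have transfer : ∀ (T : Set X), (T ⊆ A' ∧
            ((d ik ∈ A' ∧ T = {d ik}) ∨ (d ik ∈ S.axioms ∧ T = ∅) ∨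
             (∃ r ∈ S.rules, r.2 = d ik ∧ ∃ f : X → Fin n,
                (∀ p ∈ r.1, f p < ik ∧ d (f p) = p) ∧
                T = ⋃ p ∈ r.1, B (f p)))) →
            ∀ i : Fin n, i.val < k + 1 →
            Function.update B ik T i ⊆ A' ∧
            ((d i ∈ A' ∧ Function.update B ik T i = {d i}) ∨
             (d i ∈ S.axioms ∧ Function.update B ik T i = ∅) ∨
             (∃ r ∈ S.rules, r.2 = d i ∧ ∃ f : X → Fin n,
                (∀ p ∈ r.1, f p < i ∧ d (f p) = p) ∧
                Function.update B ik T i = ⋃ p ∈ r.1, Function.update B ik T (f p))) := by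
          rintro T ⟨hTsub, hTcase⟩ i hi
          by_cases hik' : i = ik
          · subst hik'
            rw [Function.update_self]
            refine ⟨hTsub, ?_⟩
            rcases hTcase with h1 | h2 | ⟨r, hr, hr2, f, hf, heq⟩
            · exact Or.inl h1
            · exact Or.inr (Or.inl h2)
            · refine Or.inr (Or.inr ⟨r, hr, hr2, f, hf, ?_⟩)
              exact heq.trans (Set.iUnion₂_congr fun p hp =>
                (hupd T (f p) (Fin.lt_def.mp (hf p hp).1)).symm)
          · have hilt : i.val < k := by
              rcases Nat.lt_succ_iff_lt_or_eq.mp hi with h | h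
              · exact h
              · exact absurd (Fin.ext h : i = ik) hik'
            rw [hupd T i hilt]
            obtain ⟨hsub, hcase⟩ := hB i hilt
            refine ⟨hsub, ?_⟩
            rcases hcase with h1 | h2 | ⟨r, hr, hr2, f, hf, heq⟩
            · exact Or.inl h1
            · exact Or.inr (Or.inl h2)
            · refine Or.inr (Or.inr ⟨r, hr, hr2, f, hf, ?_⟩)
              exact heq.trans (Set.iUnion₂_congr fun p hp =>
                (hupd T (f p) (by have := Fin.lt_def.mp (hf p hp).1; omega)).symm)
        rcases hd ik with h1 | h2 | ⟨r, hr, hr2, f, hf⟩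
        · exact ⟨Function.update B ik {d ik},
            transfer {d ik} ⟨Set.singleton_subset_iff.mpr h1, Or.inl ⟨h1, rfl⟩⟩⟩
        · exact ⟨Function.update B ik ∅,
            transfer ∅ ⟨Set.empty_subset _, Or.inr (Or.inl ⟨h2, rfl⟩)⟩⟩
        · refine ⟨Function.update B ik (⋃ p ∈ r.1, B (f p)),
            transfer _ ⟨?_, Or.inr (Or.inr ⟨r, hr, hr2, f, hf, rfl⟩)⟩⟩
          apply Set.iUnion₂_subset
          intro p hp
          exact (hB (f p) (Fin.lt_def.mp (hf p hp).1)).1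
    obtain ⟨B, hB⟩ := ex n le_rfl
    refine ⟨n, fun i => (B i, d i), hn, ?_, hlast⟩
    intro i
    obtain ⟨hsub, hcase⟩ := hB i i.isLt
    refine ⟨consistent_mono hsub hcons, ?_⟩
    rcases hcase with ⟨h1, heq⟩ | h2 | ⟨r, hr, hr2, f, hf, heq⟩
    · exact Or.inl ⟨hA'A h1, heq⟩
    · exact Or.inr (Or.inl h2)
    · exact Or.inr (Or.inr ⟨r, hr, hr2, f, hf, heq⟩)
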